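/- Let ω_μ be an uncountable regular ordinal and let X be a T1 and regular (T3) topological space that is ω_μ-additive (intersections of fewer than |ω_μ| open sets are open) and has a basis of cardinality at most |ω_μ|. Then X can be topologically embedded in the generalized Hilbert cube Q_μ = {0,1}^{ω_μ} equipped with the topology whose basic open sets fix an initial segment of coordinates: { y : y_λ = x_λ for all λ < ν }, ν ∈ ω_μ. -/

import Mathlib

open TopologicalSpace Cardinal

open Set Topology

universe u

section Helpers

variable {X : Type u} [tX : TopologicalSpace X] {κ : Cardinal.{u}}

lemma stmt18_biInter_open
    (hadd : ∀ S : Set (Set X), #S < κ → (∀ U ∈ S, IsOpen U) → IsOpen (⋂₀ S))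
    {ι : Type u} (s : Set ι) (hs : #s < κ) (V : ι → Set X) (hV : ∀ i ∈ s, IsOpen (V i)) :
    IsOpen (⋂ i ∈ s, V i) := by
  have h : (⋂ i ∈ s, V i) = ⋂₀ (V '' s) := by rw [Set.sInter_image]
  rw [h]
  exact hadd _ (lt_of_le_of_lt Cardinal.mk_image_le hs)
    (by rintro U ⟨i, hi, rfl⟩; exact hV i hi)

lemma stmt18_enum (hκ : κ.IsRegular) {α : Type u} (hα : #α ≤ κ) (g : α → Set X) :
    ∃ A : κ.ord.ToType → Set X,
      (∀ i, A i = ∅ ∨ ∃ a, A i = g a) ∧ ∀ a, ∃ i, A i = g a := by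
  classical
  have hI : #(κ.ord.ToType) = κ := Cardinal.mk_ord_toType κ
  obtain ⟨e⟩ : Nonempty (α ↪ κ.ord.ToType) := by
    rw [← Cardinal.le_def, hI]; exact hα
  set A : κ.ord.ToType → Set X := fun i => if h : ∃ a, e a = i then g h.choose else ∅ with hA
  refine ⟨A, fun i => ?_, fun a => ?_⟩
  · rw [hA]
    dsimp only
    split_ifs with h
    · exact Or.inr ⟨h.choose, rfl⟩
    · exact Or.inl rfl
  · refine ⟨e a, ?_⟩
    have h : ∃ b, e b = e a := ⟨a, rfl⟩
    rw [hA]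
    dsimp only
    rw [dif_pos h, e.injective h.choose_spec]

lemma stmt18_reg [RegularSpace X] {B : Set (Set X)} (hB : IsTopologicalBasis B)
    {U : Set X} (hU : IsOpen U) {x : X} (hx : x ∈ U) :
    ∃ V ∈ B, x ∈ V ∧ closure V ⊆ U := by
  obtain ⟨t, htx, htc, hts⟩ := exists_mem_nhds_isClosed_subset (hU.mem_nhds hx)
  obtain ⟨V, hVB, hxV, hVt⟩ := hB.mem_nhds_iff.mp htx
  exact ⟨V, hVB, hxV, (htc.closure_subset_iff.mpr hVt).trans hts⟩

lemma stmt18_cover [RegularSpace X] (hκ : κ.IsRegular)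
    {B : Set (Set X)} (hB : IsTopologicalBasis B) (hBcard : #B ≤ κ)
    {C D : Set X} (hD : IsClosed D) (hCD : Disjoint C D) :
    ∃ V : κ.ord.ToType → Set X,
      (∀ i, IsOpen (V i) ∧ Disjoint (closure (V i)) D) ∧ C ⊆ ⋃ i, V i := by
  set F : Set (Set X) := {V ∈ B | Disjoint (closure V) D} with hF
  have hFcard : #F ≤ κ :=
    le_trans (Cardinal.mk_le_mk_of_subset (Set.sep_subset _ _)) hBcard
  obtain ⟨A, hA1, hA2⟩ := stmt18_enum hκ hFcard (fun s : F => (s : Set X))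
  refine ⟨A, fun i => ?_, fun x hx => ?_⟩
  · rcases hA1 i with h | ⟨a, ha⟩
    · rw [h]; exact ⟨isOpen_empty, by simp⟩
    · rw [ha]; exact ⟨hB.isOpen a.2.1, a.2.2⟩
  · have hxD : x ∈ Dᶜ := fun h => Set.disjoint_left.mp hCD hx h
    obtain ⟨V, hVB, hxV, hVsub⟩ := stmt18_reg hB hD.isOpen_compl hxD
    have hVF : V ∈ F := ⟨hVB, Set.disjoint_left.mpr fun a ha => hVsub ha⟩
    obtain ⟨i, hi⟩ := hA2 ⟨V, hVF⟩
    exact Set.mem_iUnion.mpr ⟨i, by rw [hi]; exact hxV⟩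

lemma stmt18_normal [RegularSpace X] (hκ : κ.IsRegular) (hu : Cardinal.aleph0 < κ)
    (hadd : ∀ S : Set (Set X), #S < κ → (∀ U ∈ S, IsOpen U) → IsOpen (⋂₀ S))
    {B : Set (Set X)} (hB : IsTopologicalBasis B) (hBcard : #B ≤ κ) :
    NormalSpace X := by
  constructor
  intro C D hC hD hCD
  obtain ⟨V, hV, hCV⟩ := stmt18_cover hκ hB hBcard hD hCD
  obtain ⟨W, hW, hDW⟩ := stmt18_cover hκ hB hBcard hC hCD.symm
  have hIic : ∀ i : κ.ord.ToType, #(Set.Iic i) < κ := by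
    intro i
    rw [← Set.Iio_insert]
    exact lt_of_le_of_lt Cardinal.mk_insert_le
      (Cardinal.add_lt_of_lt hκ.aleph0_le (Cardinal.mk_Iio_ord_toType i)
        (lt_of_lt_of_le Cardinal.one_lt_aleph0 hκ.aleph0_le))
  set U1 : Set X := ⋃ i, (V i \ ⋃ j ∈ Set.Iic i, closure (W j)) with hU1
  set U2 : Set X := ⋃ i, (W i \ ⋃ j ∈ Set.Iic i, closure (V j)) with hU2
  have hopen : ∀ (V W : κ.ord.ToType → Set X), (∀ i, IsOpen (V i)) →
      IsOpen (⋃ i, (V i \ ⋃ j ∈ Set.Iic i, closure (W j))) := by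
    intro V W hV
    refine isOpen_iUnion fun i => ?_
    rw [Set.diff_eq, Set.compl_iUnion₂]
    exact (hV i).inter (stmt18_biInter_open hadd _ (hIic i) _
      fun j _ => isClosed_closure.isOpen_compl)
  refine ⟨U1, U2, hopen V W fun i => (hV i).1, hopen W V fun i => (hW i).1, ?_, ?_, ?_⟩
  · intro x hx
    obtain ⟨i, hi⟩ := Set.mem_iUnion.mp (hCV hx)
    refine Set.mem_iUnion.mpr ⟨i, hi, ?_⟩
    simp only [Set.mem_iUnion]
    rintro ⟨j, -, hj⟩
    exact Set.disjoint_left.mp (hW j).2 hj hx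
  · intro x hx
    obtain ⟨i, hi⟩ := Set.mem_iUnion.mp (hDW hx)
    refine Set.mem_iUnion.mpr ⟨i, hi, ?_⟩
    simp only [Set.mem_iUnion]
    rintro ⟨j, -, hj⟩
    exact Set.disjoint_left.mp (hV j).2 hj hx
  · rw [Set.disjoint_left]
    rintro x hx1 hx2
    obtain ⟨i, hVi, hi⟩ := Set.mem_iUnion.mp hx1
    obtain ⟨k, hWk, hk⟩ := Set.mem_iUnion.mp hx2
    rcases le_total k i with h | h
    · exact hi (Set.mem_iUnion₂.mpr ⟨k, h, subset_closure hWk⟩)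
    · exact hk (Set.mem_iUnion₂.mpr ⟨i, h, subset_closure hVi⟩)

lemma stmt18_clopen [NormalSpace X] (hu : Cardinal.aleph0 < κ)
    (hadd : ∀ S : Set (Set X), #S < κ → (∀ U ∈ S, IsOpen U) → IsOpen (⋂₀ S))
    {C D : Set X} (hC : IsClosed C) (hD : IsClosed D) (hCD : Disjoint C D) :
    ∃ A : Set X, IsClopen A ∧ C ⊆ A ∧ Disjoint A D := by
  obtain ⟨f, hf0, hf1, hf01⟩ := exists_continuous_zero_one_of_isClosed hC hD hCD
  have hkey : f ⁻¹' Set.Iic (1/2 : ℝ) =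
      ⋂ n : ℕ, f ⁻¹' Set.Iio ((1:ℝ)/2 + 1/(n+1)) := by
    ext x
    simp only [Set.mem_preimage, Set.mem_Iic, Set.mem_iInter, Set.mem_Iio]
    constructor
    · intro h n
      have : (0:ℝ) < 1/(n+1) := by positivity
      linarith
    · intro h
      by_contra hgt
      push_neg at hgt
      obtain ⟨n, hn⟩ := exists_nat_one_div_lt (sub_pos.mpr hgt)
      linarith [h n]
  have hopen : IsOpen (f ⁻¹' Set.Iic (1/2 : ℝ)) := by
    rw [hkey, ← Set.sInter_range]
    refine hadd _ (lt_of_le_of_lt ?_ hu) ?_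
    · exact (Set.countable_range _).le_aleph0
    · rintro U ⟨n, rfl⟩
      exact isOpen_Iio.preimage f.continuous
  refine ⟨f ⁻¹' Set.Iic (1/2 : ℝ), ⟨isClosed_Iic.preimage f.continuous, hopen⟩, ?_, ?_⟩
  · intro x hx
    simp only [Set.mem_preimage, Set.mem_Iic, hf0 hx]
    norm_num
  · rw [Set.disjoint_left]
    intro x hx hxD
    simp only [Set.mem_preimage, Set.mem_Iic] at hx
    rw [hf1 hxD] at hx
    norm_num at hx

end Helpers

section Main

variable {X : Type u} [tX : TopologicalSpace X] {κ : Cardinal.{u}}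

lemma stmt18_clopen_basis [RegularSpace X] (hκ : κ.IsRegular) (hu : Cardinal.aleph0 < κ)
    (hadd : ∀ S : Set (Set X), #S < κ → (∀ U ∈ S, IsOpen U) → IsOpen (⋂₀ S))
    {B : Set (Set X)} (hB : IsTopologicalBasis B) (hBcard : #B ≤ κ) :
    ∃ A : κ.ord.ToType → Set X, (∀ i, IsClopen (A i)) ∧
      ∀ (U : Set X) (x : X), IsOpen U → x ∈ U → ∃ i, x ∈ A i ∧ A i ⊆ U := by
  classical
  haveI := stmt18_normal hκ hu hadd hB hBcard
  have key : ∀ p : ↥B × ↥B, ∃ A : Set X, IsClopen A ∧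
      (closure (p.1 : Set X) ⊆ (p.2 : Set X) → ((p.1 : Set X) ⊆ A ∧ A ⊆ (p.2 : Set X))) := by
    rintro ⟨V, W⟩
    by_cases h : closure (V : Set X) ⊆ (W : Set X)
    · have hdisj : Disjoint (closure (V : Set X)) ((W : Set X)ᶜ) :=
        Set.disjoint_left.mpr fun a ha hc => hc (h ha)
      obtain ⟨A, hA, hCA, hAD⟩ := stmt18_clopen hu hadd isClosed_closure
        (hB.isOpen W.2).isClosed_compl hdisj
      refine ⟨A, hA, fun _ => ⟨subset_closure.trans hCA, fun a ha => ?_⟩⟩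
      by_contra hc
      exact Set.disjoint_left.mp hAD ha hc
    · exact ⟨∅, isClopen_empty, fun hc => absurd hc h⟩
  choose g hg1 hg2 using key
  have hprod : #(↥B × ↥B) ≤ κ := by
    simp only [Cardinal.mk_prod, Cardinal.lift_id]
    exact le_trans (Cardinal.mul_le_max _ _) (max_le (max_le hBcard hBcard) hu.le)
  obtain ⟨A, hA1, hA2⟩ := stmt18_enum hκ hprod g
  refine ⟨A, fun i => ?_, fun U x hU hx => ?_⟩
  · rcases hA1 i with h | ⟨p, hp⟩
    · rw [h]; exact isClopen_empty
    · rw [hp]; exact hg1 p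
  · obtain ⟨W, hWB, hxW, hWU⟩ := hB.exists_subset_of_mem_open hx hU
    obtain ⟨V, hVB, hxV, hVW⟩ := stmt18_reg hB (hB.isOpen hWB) hxW
    obtain ⟨hsub1, hsub2⟩ := hg2 (⟨V, hVB⟩, ⟨W, hWB⟩) hVW
    obtain ⟨i, hi⟩ := hA2 (⟨V, hVB⟩, ⟨W, hWB⟩)
    exact ⟨i, by rw [hi]; exact hsub1 hxV, by rw [hi]; exact hsub2.trans hWU⟩

end Main

/-- An uncountable-regular-ordinal version of the embedding theorem: a T1,
regular space which is `ω_μ`-additive (`ω_μ = κ.ord`, `κ` a regular uncountable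
cardinal) and has a basis of cardinality at most `κ = |ω_μ|` embeds in the generalized
Hilbert cube `Q_μ = {0,1}^{ω_μ}` carrying the topology generated by the sets fixing all
coordinates below some `ν`. -/
theorem stmt18 {X : Type*} [tX : TopologicalSpace X] [T1Space X] [RegularSpace X]
    (κ : Cardinal) (hκ : κ.IsRegular) (hu : Cardinal.aleph0 < κ)
    (hadd : ∀ S : Set (Set X), #S < κ → (∀ U ∈ S, IsOpen U) → IsOpen (⋂₀ S))
    (B : Set (Set X)) (hB : IsTopologicalBasis B) (hBcard : #B ≤ κ) :
    ∃ f : X → (κ.ord.ToType → Bool),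
      @Topology.IsEmbedding X (κ.ord.ToType → Bool) tX
        (.generateFrom {s : Set (κ.ord.ToType → Bool) |
          ∃ (x : κ.ord.ToType → Bool) (ν : κ.ord.ToType), s = {y | ∀ l < ν, y l = x l}})
        f := by
  classical
  obtain ⟨A, hclopen, hbasis⟩ := stmt18_clopen_basis hκ hu hadd hB hBcard
  haveI : NoMaxOrder κ.ord.ToType := Cardinal.noMaxOrder hκ.aleph0_le
  set G : Set (Set (κ.ord.ToType → Bool)) :=
    {s | ∃ (x : κ.ord.ToType → Bool) (ν : κ.ord.ToType), s = {y | ∀ l < ν, y l = x l}} with hG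
  letI τ : TopologicalSpace (κ.ord.ToType → Bool) := .generateFrom G
  set f : X → κ.ord.ToType → Bool := fun x i => if x ∈ A i then true else false with hf
  have hft : ∀ x i, f x i = true ↔ x ∈ A i := by
    intro x i; rw [hf]; dsimp only; split_ifs with h <;> simp [h]
  have hff : ∀ x i, f x i = false ↔ x ∉ A i := by
    intro x i; rw [hf]; dsimp only; split_ifs with h <;> simp [h]
  refine ⟨f, ⟨?_⟩, ?_⟩
  · -- tX = induced f τ
    apply le_antisymm
    · -- tX ≤ induced f τ
      rw [show (TopologicalSpace.generateFrom G).induced f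
            = TopologicalSpace.generateFrom (Set.preimage f '' G) from induced_generateFrom_eq]
      rw [le_generateFrom_iff_subset_isOpen]
      rintro s ⟨t, ⟨c, ν, rfl⟩, rfl⟩
      have heq : f ⁻¹' {y | ∀ l < ν, y l = c l} = ⋂ l ∈ Set.Iio ν, {x | f x l = c l} := by
        ext z
        simp only [Set.mem_preimage, Set.mem_setOf_eq, Set.mem_iInter, Set.mem_Iio]
      rw [heq]
      refine stmt18_biInter_open hadd _ (Cardinal.mk_Iio_ord_toType ν) _ fun l _ => ?_
      show IsOpen {x : X | f x l = c l}
      cases hc : c l with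
      | false =>
        have h2 : {x : X | f x l = false} = (A l)ᶜ := by
          ext z; simp only [Set.mem_setOf_eq, hff, Set.mem_compl_iff]
        rw [h2]; exact (hclopen l).1.isOpen_compl
      | true =>
        have h2 : {x : X | f x l = true} = A l := by
          ext z; simp only [Set.mem_setOf_eq, hft]
        rw [h2]; exact (hclopen l).2
    · -- induced f τ ≤ tX
      refine isOpen_implies_isOpen_iff.mp fun U hU => ?_
      rw [isOpen_induced_iff]
      choose i hi1 hi2 using fun x : U => hbasis U x hU x.2
      choose ν hν using fun x : U => exists_gt (i x)
      refine ⟨⋃ x : U, {y | ∀ l < ν x, y l = f x l}, ?_, ?_⟩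
      · exact isOpen_iUnion fun x =>
          TopologicalSpace.isOpen_generateFrom_of_mem ⟨f x, ν x, rfl⟩
      · ext z
        simp only [Set.mem_preimage, Set.mem_iUnion, Set.mem_setOf_eq]
        constructor
        · rintro ⟨x, hx⟩
          have h1 : f z (i x) = f x (i x) := hx (i x) (hν x)
          have h2 : f x (i x) = true := (hft _ _).mpr (hi1 x)
          exact hi2 x ((hft _ _).mp (h1.trans h2))
        · intro hz
          exact ⟨⟨z, hz⟩, fun l _ => rfl⟩
  · -- injective
    intro x y hxy
    by_contra hne
    have hxU : x ∈ ({y}ᶜ : Set X) := by simp [hne]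
    obtain ⟨j, hxj, hsub⟩ := hbasis {y}ᶜ x isOpen_compl_singleton hxU
    have h1 : f x j = true := (hft _ _).mpr hxj
    have h2 : f y j = false := (hff _ _).mpr fun hyj => (hsub hyj) rfl
    rw [hxy, h2] at h1
    exact Bool.false_ne_true h1
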